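/- The Partial Functionality axiom is sound: for every state model S and state s, s satisfies [σ_i ψ⃗]¬χ if and only if s satisfies ψ_i → ¬[σ_i ψ⃗]χ. The key fact is that the update induced by the program σ_i ψ⃗ relates each state s to at most one state, namely (s,σ_i) when s satisfies ψ_i. -/
import Mathlib


structure StateModel (Agent Atom : Type) where
  World : Type
  rel : Agent → World → World → Prop
  val : Atom → World → Prop

/-- An epistemic proposition assigns to each state model a set of its worlds. -/
def EProp (Agent Atom : Type) := (S : StateModel Agent Atom) → Set S.World

/-- The update product `S ⊗ Σ` for a signature-based program model: action
types are `Fin n` with accessibility `srel` and preconditions `ψ`; the new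
states are pairs `(s, σⱼ)` with `s ∈ ⟦ψⱼ⟧_S`, with product accessibility
relations and valuation inherited from `S`. -/
def prodModel {Agent Atom : Type} {n : ℕ} (S : StateModel Agent Atom)
    (srel : Agent → Fin n → Fin n → Prop) (ψ : Fin n → EProp Agent Atom) :
    StateModel Agent Atom where
  World := {x : S.World × Fin n // x.1 ∈ ψ x.2 S}
  rel A x y := S.rel A x.1.1 y.1.1 ∧ srel A x.1.2 y.1.2
  val p x := S.val p x.1.1

/-- Soundness of Partial Functionality: `[σᵢ ψ⃗]¬χ ↔ (ψᵢ → ¬[σᵢ ψ⃗]χ)`, together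
with the key fact that the update induced by `σᵢ ψ⃗` relates each state to at
most one state (namely `(s, σᵢ)` when `s` satisfies `ψᵢ`).  Here `χ'` is the
interpretation of an arbitrary sentence `χ` in the updated model. -/
theorem partial_functionality_sound {Agent Atom : Type} {n : ℕ}
    (S : StateModel Agent Atom) (srel : Agent → Fin n → Fin n → Prop)
    (ψ : Fin n → EProp Agent Atom) (i : Fin n) (s : S.World)
    (χ' : (prodModel S srel ψ).World → Prop) :
    (∀ t t' : (prodModel S srel ψ).World, t.1 = (s, i) → t'.1 = (s, i) → t = t') ∧
    ((∀ t : (prodModel S srel ψ).World, t.1 = (s, i) → ¬ χ' t)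
      ↔ (s ∈ ψ i S → ¬ (∀ t : (prodModel S srel ψ).World, t.1 = (s, i) → χ' t))) := by
  constructor
  · rintro ⟨t, ht⟩ ⟨t', ht'⟩ h1 h2
    simp only at h1 h2
    subst h1; subst h2; rfl
  · constructor
    · intro h hs hall
      exact h ⟨(s, i), hs⟩ rfl (hall ⟨(s, i), hs⟩ rfl)
    · intro h t ht hχ
      have hs : s ∈ ψ i S := by
        have := t.2
        rw [ht] at this
        exact this
      apply h hs
      intro t' ht'
      have : t' = t := Subtype.ext (ht'.trans ht.symm)
      rw [this]; exact hχ
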